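/- Let B be a stationary Bratteli diagram whose tail equivalence relation R is aperiodic and whose incidence matrix F satisfies condition (I). Let Λ be the set of classes α with F_α ≠ 0, B_α the subdiagram of B on the vertices of class α, Y_α its path space, and X_α the R-saturation of Y_α (the paths tail-equivalent to a path in Y_α). Then for every α ∈ Λ and every x ∈ X_α, the closure of the R-class of x equals ∪_{β ∈ Λ, β ⪰ α} X_β, where ⪰ is the access relation in R(A), A = F^T. Consequently, the minimal components of X_B for R (the minimal nonempty closed R-saturated subsets) are exactly X_1,…,X_s, those X_α with α an initial class of R(A). -/

import Mathlib

open MeasureTheory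

/-- A stationary Bratteli diagram with vertex set `Fin N` at every level `n ≥ 1`:
`Edge0` is the set of edges from the top vertex `v₀` to level 1, and `Edge` is the
(common) set of edges between two consecutive levels `n, n+1` for `n ≥ 1`. -/
structure StationaryBratteli (N : ℕ) where
  Edge0 : Type
  Edge : Type
  fintypeE0 : Fintype Edge0
  fintypeE : Fintype Edge
  rng0 : Edge0 → Fin N
  src : Edge → Fin N
  rng : Edge → Fin N
  rng0_surj : Function.Surjective rng0
  src_surj : Function.Surjective src
  rng_surj : Function.Surjective rng

namespace StationaryBratteli

variable {N : ℕ} (B : StationaryBratteli N)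

instance : Fintype B.Edge0 := B.fintypeE0
instance : Fintype B.Edge := B.fintypeE
instance : TopologicalSpace B.Edge0 := ⊥
instance : TopologicalSpace B.Edge := ⊥

/-- The path space `X_B`: an edge from `v₀` together with a compatible sequence of edges
through the subsequent levels. -/
def Path : Type :=
  { x : B.Edge0 × (ℕ → B.Edge) //
      B.rng0 x.1 = B.src (x.2 0) ∧ ∀ n, B.rng (x.2 n) = B.src (x.2 (n + 1)) }

instance : TopologicalSpace B.Path :=
  inferInstanceAs (TopologicalSpace
    { x : B.Edge0 × (ℕ → B.Edge) //
        B.rng0 x.1 = B.src (x.2 0) ∧ ∀ n, B.rng (x.2 n) = B.src (x.2 (n + 1)) })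

noncomputable instance : MeasurableSpace B.Path := borel B.Path
instance : BorelSpace B.Path := ⟨rfl⟩

/-- The vertex (at level `n + 1`) through which the path `x` passes. -/
def vtx (x : B.Path) (n : ℕ) : Fin N := B.src (x.1.2 n)

/-- The cylinder set of paths agreeing with `x` on the initial edge and on the first `n`
subsequent edges (a finite path ending at the vertex `B.vtx x n` of level `n + 1`). -/
def cylinder (x : B.Path) (n : ℕ) : Set B.Path :=
  { y | y.1.1 = x.1.1 ∧ ∀ k, k < n → y.1.2 k = x.1.2 k }

/-- The tail (cofinal) equivalence relation on the path space. -/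
def TailEquiv (x y : B.Path) : Prop := ∃ M : ℕ, ∀ n, M ≤ n → x.1.2 n = y.1.2 n

/-- The tail equivalence relation is aperiodic: every class is infinite. -/
def Aperiodic : Prop := ∀ x : B.Path, { y | B.TailEquiv x y }.Infinite

/-- A (Borel) measure on the path space is `R`-invariant iff any two cylinder sets given
by finite initial paths ending at the same vertex have equal measure. -/
def IsRInvariant (μ : Measure B.Path) : Prop :=
  ∀ (x y : B.Path) (n : ℕ), B.vtx x n = B.vtx y n →
    μ (B.cylinder x n) = μ (B.cylinder y n)

/-- A subset of the path space is saturated with respect to the tail equivalence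
relation. -/
def Saturated (S : Set B.Path) : Prop := ∀ x ∈ S, ∀ y, B.TailEquiv x y → y ∈ S

/-- An `R`-invariant measure is ergodic iff every saturated Borel set is null or
conull. -/
def ErgodicR (μ : Measure B.Path) : Prop :=
  ∀ S : Set B.Path, MeasurableSet S → B.Saturated S → μ S = 0 ∨ μ Sᶜ = 0

/-- The incidence matrix `F` of the stationary diagram: `F v w` is the number of edges
from the vertex `w` (lower level) to the vertex `v` (next level). -/
noncomputable def F : Matrix (Fin N) (Fin N) ℕ :=
  fun v w => Nat.card { e : B.Edge // B.src e = w ∧ B.rng e = v }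

/-- The incidence matrix as a real matrix. -/
noncomputable def Fmat : Matrix (Fin N) (Fin N) ℝ := fun v w => (B.F v w : ℝ)

/-- The matrix `A = F^T` (with real entries). -/
noncomputable def A : Matrix (Fin N) (Fin N) ℝ := B.Fmat.transpose

/-- The heights: `heightS n w` is the number of finite paths from the top vertex `v₀` to
the vertex `w` at level `n + 1` (so it is the height vector `h^{(n+1)}` of the paper). -/
noncomputable def heightS : ℕ → Fin N → ℕ
  | 0 => fun w => Nat.card { e : B.Edge0 // B.rng0 e = w }
  | (n + 1) => fun v => ∑ w : Fin N, B.F v w * heightS n w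

end StationaryBratteli


section PerronFrobenius

variable {ι : Type} [Fintype ι] [DecidableEq ι]

/-- The vertex `i` has access to the vertex `j` in the directed graph `G(M)` of the
nonnegative matrix `M` (an arrow from `a` to `b` iff `M a b ≠ 0`). -/
def MAccess (M : Matrix ι ι ℝ) (i j : ι) : Prop :=
  Relation.ReflTransGen (fun a b => M a b ≠ 0) i j

/-- Two vertices communicate (belong to the same class) iff each has access to the
other. -/
def MComm (M : Matrix ι ι ℝ) (i j : ι) : Prop := MAccess M i j ∧ MAccess M j i

/-- The communicating class of the vertex `i`. -/
def classOf (M : Matrix ι ι ℝ) (i : ι) : Set ι := { j | MComm M i j }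

/-- The diagonal block corresponding to the class of `i` is nonzero. -/
def BlockNonzero (M : Matrix ι ι ℝ) (i : ι) : Prop :=
  ∃ a ∈ classOf M i, ∃ b ∈ classOf M i, M a b ≠ 0

/-- The diagonal block corresponding to the class of `i` is primitive: some power of `M`
is strictly positive on this class (paths between vertices of a class stay in the class,
so this is equivalent to primitivity of the diagonal block). -/
def BlockPrimitive (M : Matrix ι ι ℝ) (i : ι) : Prop :=
  ∃ k : ℕ, 1 ≤ k ∧ ∀ a ∈ classOf M i, ∀ b ∈ classOf M i, 0 < (M ^ k) a b

/-- The diagonal block corresponding to the class of `i` is strictly positive. -/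
def BlockPositive (M : Matrix ι ι ℝ) (i : ι) : Prop :=
  ∀ a ∈ classOf M i, ∀ b ∈ classOf M i, 0 < M a b

/-- The class of `i` is initial in the reduced graph `R(M)`: no other class has access
to it. -/
def InitialClass (M : Matrix ι ι ℝ) (i : ι) : Prop :=
  ∀ j, MAccess M j i → MComm M j i

/-- The spectral radius of a real square matrix: the largest absolute value of a complex
eigenvalue. -/
noncomputable def specRad {κ : Type} [Fintype κ] [DecidableEq κ] (M : Matrix κ κ ℝ) : ℝ :=
  sSup { r : ℝ | ∃ z : ℂ, z ∈ spectrum ℂ (M.map Complex.ofReal) ∧ r = ‖z‖ }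

/-- The spectral radius `ρ_α` of the diagonal block of `M` corresponding to the class of
the vertex `i`. -/
noncomputable def blockSpecRad (M : Matrix ι ι ℝ) (i : ι) : ℝ :=
  letI : Fintype (classOf M i) := (Set.toFinite (classOf M i)).fintype
  specRad (M.submatrix (Subtype.val : classOf M i → ι) Subtype.val)

/-- The class of `i` is distinguished: its spectral radius strictly dominates the
spectral radius of every other class having access to it. -/
def Distinguished (M : Matrix ι ι ℝ) (i : ι) : Prop :=
  ∀ j, MAccess M j i → ¬ MComm M j i → blockSpecRad M j < blockSpecRad M i

/-- `λ` is a distinguished eigenvalue of `M`: there is a nonzero nonnegative eigenvector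
for `λ`. -/
def DistinguishedEigenvalue (M : Matrix ι ι ℝ) (lam : ℝ) : Prop :=
  ∃ v : ι → ℝ, v ≠ 0 ∧ (∀ j, 0 ≤ v j) ∧ M.mulVec v = lam • v

/-- `ξ` is the distinguished eigenvector associated to the distinguished class of `i`:
a nonnegative eigenvector for the eigenvalue `ρ_α` whose coordinate at a vertex `j` is
positive iff `j` has access to the class. -/
def IsDistinguishedEigenvector (M : Matrix ι ι ℝ) (i : ι) (ξ : ι → ℝ) : Prop :=
  (∀ j, 0 ≤ ξ j) ∧ M.mulVec ξ = blockSpecRad M i • ξ ∧ ∀ j, (0 < ξ j ↔ MAccess M j i)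

/-- The core of a nonnegative matrix: `core(M) = ⋂_{k ≥ 1} M^k (ℝ^N_+)`. -/
def matCore (M : Matrix ι ι ℝ) : Set (ι → ℝ) :=
  { x | ∀ k : ℕ, 1 ≤ k → ∃ y : ι → ℝ, (∀ j, 0 ≤ y j) ∧ (M ^ k).mulVec y = x }

/-- `M` is in Frobenius normal form: block lower triangular with respect to the
communicating classes and the classes are intervals of indices (the diagonal blocks are
automatically irreducible). -/
def FrobeniusForm [LinearOrder ι] (M : Matrix ι ι ℝ) : Prop :=
  (∀ i j, M i j ≠ 0 → MComm M i j ∨ j < i) ∧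
  (∀ i j k, i ≤ j → j ≤ k → MComm M i k → MComm M i j)

/-- Condition (I): `M` is in Frobenius normal form and every nonzero diagonal block is
primitive. -/
def CondI [LinearOrder ι] (M : Matrix ι ι ℝ) : Prop :=
  FrobeniusForm M ∧ ∀ i, BlockNonzero M i → BlockPrimitive M i

/-- Condition (I′): `M` is in Frobenius normal form and every nonzero diagonal block is
strictly positive. -/
def CondI' [LinearOrder ι] (M : Matrix ι ι ℝ) : Prop :=
  FrobeniusForm M ∧ ∀ i, BlockNonzero M i → BlockPositive M i

end PerronFrobenius

namespace StationaryBratteli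

variable {N : ℕ} (B : StationaryBratteli N)

/-- The path space `Y_α` of the subdiagram `B_α` on the vertices of the class of `i`:
the paths all of whose vertices (from level 1 on) lie in the class. -/
def Ysub (i : Fin N) : Set B.Path := { x | ∀ n, B.vtx x n ∈ classOf B.A i }

/-- `X_α`: the saturation of `Y_α` with respect to the tail equivalence relation. -/
def Xsat (i : Fin N) : Set B.Path := { x | ∃ y ∈ B.Ysub i, B.TailEquiv y x }

end StationaryBratteli

set_option linter.unusedSectionVars false

section MatrixAux

open Relation

variable {ι : Type} [Fintype ι] [DecidableEq ι]

lemma matpow_nonneg {M : Matrix ι ι ℝ} (h : ∀ a b, 0 ≤ M a b) :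
    ∀ (k : ℕ) (a b : ι), 0 ≤ (M ^ k) a b := by
  intro k
  induction k with
  | zero =>
    intro a b
    rw [pow_zero, Matrix.one_apply]
    split <;> norm_num
  | succ n ih =>
    intro a b
    rw [pow_succ, Matrix.mul_apply]
    exact Finset.sum_nonneg fun c _ => mul_nonneg (ih a c) (h c b)

lemma mul_entry_ne {M N : Matrix ι ι ℝ} (hM : ∀ a b, 0 ≤ M a b) (hN : ∀ a b, 0 ≤ N a b)
    {a c b : ι} (h1 : M a c ≠ 0) (h2 : N c b ≠ 0) : (M * N) a b ≠ 0 := by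
  have : 0 < (M * N) a b := by
    rw [Matrix.mul_apply]
    exact Finset.sum_pos' (fun d _ => mul_nonneg (hM a d) (hN d b))
      ⟨c, Finset.mem_univ c, mul_pos ((hM a c).lt_of_ne (Ne.symm h1))
        ((hN c b).lt_of_ne (Ne.symm h2))⟩
  exact this.ne'

lemma pow_peel_left {M : Matrix ι ι ℝ} {k : ℕ} {a b : ι} (h : (M ^ (k + 1)) a b ≠ 0) :
    ∃ c, M a c ≠ 0 ∧ (M ^ k) c b ≠ 0 := by
  rw [pow_succ', Matrix.mul_apply] at h
  obtain ⟨c, _, hc⟩ := Finset.exists_ne_zero_of_sum_ne_zero h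
  exact ⟨c, left_ne_zero_of_mul hc, right_ne_zero_of_mul hc⟩

lemma pow_peel_right {M : Matrix ι ι ℝ} {k : ℕ} {a b : ι} (h : (M ^ (k + 1)) a b ≠ 0) :
    ∃ c, (M ^ k) a c ≠ 0 ∧ M c b ≠ 0 := by
  rw [pow_succ, Matrix.mul_apply] at h
  obtain ⟨c, _, hc⟩ := Finset.exists_ne_zero_of_sum_ne_zero h
  exact ⟨c, left_ne_zero_of_mul hc, right_ne_zero_of_mul hc⟩

lemma access_of_pow {M : Matrix ι ι ℝ} :
    ∀ {k : ℕ} {a b : ι}, (M ^ k) a b ≠ 0 → MAccess M a b := by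
  intro k
  induction k with
  | zero =>
    intro a b h
    have hab : a = b := by
      by_contra hne
      rw [pow_zero, Matrix.one_apply_ne hne] at h
      exact h rfl
    subst hab
    exact ReflTransGen.refl
  | succ n ih =>
    intro a b h
    obtain ⟨c, h1, h2⟩ := pow_peel_left h
    exact ReflTransGen.head h1 (ih h2)

lemma pow_of_access {M : Matrix ι ι ℝ} (hM : ∀ a b, 0 ≤ M a b) {a b : ι}
    (h : MAccess M a b) : ∃ k, (M ^ k) a b ≠ 0 := by
  induction h with
  | refl => exact ⟨0, by rw [pow_zero, Matrix.one_apply_eq]; norm_num⟩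
  | tail hab hbc ih =>
    obtain ⟨k, hk⟩ := ih
    exact ⟨k + 1, by rw [pow_succ]; exact mul_entry_ne (matpow_nonneg hM k) hM hk hbc⟩

lemma classOf_eq_of_comm {M : Matrix ι ι ℝ} {i j : ι} (h : MComm M i j) :
    classOf M i = classOf M j := by
  ext d
  exact ⟨fun hd => ⟨h.2.trans hd.1, hd.2.trans h.1⟩,
    fun hd => ⟨h.1.trans hd.1, hd.2.trans h.2⟩⟩

lemma exists_initial_access (M : Matrix ι ι ℝ) (b : ι) :
    ∃ g, InitialClass M g ∧ MAccess M g b := by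
  classical
  let T : ι → Finset ι := fun g => Finset.univ.filter fun j => MAccess M j g
  obtain ⟨g, hg, hmin⟩ := Finset.exists_min_image
    (Finset.univ.filter fun j => MAccess M j b) (fun g => (T g).card)
    ⟨b, by simp only [Finset.mem_filter]; exact ⟨Finset.mem_univ _, ReflTransGen.refl⟩⟩
  rw [Finset.mem_filter] at hg
  refine ⟨g, ?_, hg.2⟩
  intro d hd
  have hdb : MAccess M d b := hd.trans hg.2
  have hsub : T d ⊆ T g := by
    intro j hj
    rw [Finset.mem_filter] at hj ⊢
    exact ⟨Finset.mem_univ _, hj.2.trans hd⟩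
  have hcard : (T g).card ≤ (T d).card := hmin d (by simp only [Finset.mem_filter]; exact ⟨Finset.mem_univ _, hdb⟩)
  have heq : T d = T g := Finset.eq_of_subset_of_card_le hsub hcard
  have hgd : g ∈ T d := by
    rw [heq, Finset.mem_filter]
    exact ⟨Finset.mem_univ _, ReflTransGen.refl⟩
  rw [Finset.mem_filter] at hgd
  exact ⟨hd, hgd.2⟩

end MatrixAux
namespace StationaryBratteli

open Relation

variable {N : ℕ} (B : StationaryBratteli N)

instance : DiscreteTopology B.Edge := ⟨rfl⟩
instance : DiscreteTopology B.Edge0 := ⟨rfl⟩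

lemma A_apply (w v : Fin N) : B.A w v = (B.F v w : ℝ) := rfl

lemma A_nonneg : ∀ w v, 0 ≤ B.A w v := fun w v => by
  rw [B.A_apply]; exact Nat.cast_nonneg _

lemma A_ne_iff {w v : Fin N} :
    B.A w v ≠ 0 ↔ ∃ e : B.Edge, B.src e = w ∧ B.rng e = v := by
  rw [B.A_apply, Nat.cast_ne_zero]
  simp only [StationaryBratteli.F]
  rw [Nat.card_ne_zero]
  constructor
  · rintro ⟨⟨⟨e, he⟩⟩, -⟩
    exact ⟨e, he⟩
  · rintro ⟨e, he⟩
    exact ⟨⟨⟨e, he⟩⟩, inferInstance⟩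

lemma A_step (y : B.Path) (n : ℕ) : B.A (B.vtx y n) (B.vtx y (n + 1)) ≠ 0 := by
  rw [B.A_ne_iff]
  exact ⟨y.1.2 n, rfl, y.2.2 n⟩

lemma vtx_access (y : B.Path) {n m : ℕ} (h : n ≤ m) :
    MAccess B.A (B.vtx y n) (B.vtx y m) := by
  induction m, h using Nat.le_induction with
  | base => exact ReflTransGen.refl
  | succ m hm ih => exact ih.tail (B.A_step y m)

lemma access_A_iff {a b : Fin N} : MAccess B.A a b ↔ MAccess B.Fmat b a := by
  have h : (fun a b : Fin N => B.A a b ≠ 0) = Function.swap fun a b : Fin N => B.Fmat a b ≠ 0 := rfl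
  unfold MAccess
  rw [h]
  exact Relation.reflTransGen_swap

lemma comm_A_iff {a b : Fin N} : MComm B.A a b ↔ MComm B.Fmat a b := by
  unfold MComm
  rw [B.access_A_iff, B.access_A_iff]
  tauto

lemma classOf_A_eq (i : Fin N) : classOf B.A i = classOf B.Fmat i := by
  ext j
  exact B.comm_A_iff

lemma primA (hI : CondI B.Fmat) {j : Fin N} (hj : BlockNonzero B.A j) :
    ∃ k, 1 ≤ k ∧ ∀ m, k ≤ m → ∀ a ∈ classOf B.A j, ∀ b ∈ classOf B.A j,
      0 < (B.A ^ m) a b := by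
  have hj' : BlockNonzero B.Fmat j := by
    obtain ⟨a, ha, b, hb, hab⟩ := hj
    rw [B.classOf_A_eq] at ha hb
    exact ⟨b, hb, a, ha, hab⟩
  obtain ⟨k, hk1, hk⟩ := hI.2 j hj'
  have hbase : ∀ a ∈ classOf B.A j, ∀ b ∈ classOf B.A j, 0 < (B.A ^ k) a b := by
    intro a ha b hb
    have hT : (B.A ^ k) a b = (B.Fmat ^ k) b a := by
      show ((B.Fmat.transpose) ^ k) a b = _
      rw [← Matrix.transpose_pow]
      rfl
    rw [hT]
    rw [B.classOf_A_eq] at ha hb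
    exact hk b hb a ha
  have hstep : ∀ b ∈ classOf B.A j, ∃ c ∈ classOf B.A j, B.A c b ≠ 0 := by
    intro b hb
    have hbb : (B.A ^ k) b b ≠ 0 := (hbase b hb b hb).ne'
    obtain ⟨k', rfl⟩ : ∃ k', k = k' + 1 := ⟨k - 1, by omega⟩
    obtain ⟨c, h1, h2⟩ := pow_peel_right hbb
    have hac : MAccess B.A b c := access_of_pow h1
    have hcb : MAccess B.A c b := ReflTransGen.single h2
    exact ⟨c, ⟨hb.1.trans hac, hcb.trans hb.2⟩, h2⟩
  refine ⟨k, hk1, ?_⟩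
  have key : ∀ d, ∀ a ∈ classOf B.A j, ∀ b ∈ classOf B.A j, 0 < (B.A ^ (k + d)) a b := by
    intro d
    induction d with
    | zero => simpa using hbase
    | succ d ih =>
      intro a ha b hb
      obtain ⟨c, hc, hcb⟩ := hstep b hb
      rw [← add_assoc, pow_succ, Matrix.mul_apply]
      exact Finset.sum_pos'
        (fun e _ => mul_nonneg (matpow_nonneg B.A_nonneg _ a e) (B.A_nonneg e b))
        ⟨c, Finset.mem_univ c, mul_pos (ih a ha c hc)
          ((B.A_nonneg c b).lt_of_ne (Ne.symm hcb))⟩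
  intro m hm a ha b hb
  have h := key (m - k) a ha b hb
  rwa [show k + (m - k) = m from by omega] at h

lemma eventual_class (y : B.Path) :
    ∃ n₀, (∀ n, n₀ ≤ n → B.vtx y n ∈ classOf B.A (B.vtx y n₀)) ∧
      BlockNonzero B.A (B.vtx y n₀) := by
  classical
  let S : ℕ → Finset (Fin N) := fun n => Finset.univ.filter fun j => MAccess B.A (B.vtx y n) j
  have hmono : ∀ n m, n ≤ m → S m ⊆ S n := by
    intro n m h
    induction m, h using Nat.le_induction with
    | base => exact subset_rfl
    | succ m hm ih =>
      refine subset_trans ?_ ih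
      intro j hj
      rw [Finset.mem_filter] at hj ⊢
      exact ⟨hj.1, ReflTransGen.head (B.A_step y m) hj.2⟩
  have hne : (Set.range fun n => (S n).card).Nonempty := ⟨(S 0).card, 0, rfl⟩
  obtain ⟨n₀, hn₀⟩ := Nat.sInf_mem hne
  have hmin : ∀ n, (S n₀).card ≤ (S n).card := by
    intro n
    have hmem : (S n).card ∈ Set.range fun n => (S n).card := Set.mem_range_self n
    have := Nat.sInf_le hmem
    simp only at hn₀
    omega
  have hSeq : ∀ n, n₀ ≤ n → S n = S n₀ :=
    fun n hn => Finset.eq_of_subset_of_card_le (hmono n₀ n hn) (hmin n)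
  have hcl : ∀ n, n₀ ≤ n → B.vtx y n ∈ classOf B.A (B.vtx y n₀) := by
    intro n hn
    have hb : B.vtx y n₀ ∈ S n := by
      rw [hSeq n hn, Finset.mem_filter]
      exact ⟨Finset.mem_univ _, ReflTransGen.refl⟩
    rw [Finset.mem_filter] at hb
    exact ⟨B.vtx_access y hn, hb.2⟩
  refine ⟨n₀, hcl, ?_⟩
  exact ⟨B.vtx y n₀, ⟨ReflTransGen.refl, ReflTransGen.refl⟩,
    B.vtx y (n₀ + 1), hcl (n₀ + 1) (by omega), B.A_step y n₀⟩

end StationaryBratteli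
namespace StationaryBratteli

open Relation

variable {N : ℕ} (B : StationaryBratteli N)

lemma path_of_pow : ∀ k, 1 ≤ k → ∀ a b : Fin N, (B.A ^ k) a b ≠ 0 →
    ∃ p : ℕ → B.Edge, B.src (p 0) = a ∧
      (∀ t, t + 1 < k → B.rng (p t) = B.src (p (t + 1))) ∧
      B.rng (p (k - 1)) = b ∧
      ∀ t, t < k → MAccess B.A a (B.src (p t)) ∧ MAccess B.A (B.src (p t)) b := by
  intro k
  induction k with
  | zero => omega
  | succ n ih =>
    intro _ a b h
    by_cases hn : n = 0
    · subst hn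
      have hab : B.A a b ≠ 0 := by simpa using h
      obtain ⟨e, he1, he2⟩ := B.A_ne_iff.mp hab
      refine ⟨fun _ => e, he1, fun t ht => absurd ht (by omega), he2, ?_⟩
      intro t ht
      have ht0 : t = 0 := by omega
      subst ht0
      constructor
      · show MAccess B.A a (B.src e)
        rw [he1]
        exact ReflTransGen.refl
      · show MAccess B.A (B.src e) b
        refine ReflTransGen.single ?_
        rw [he1]
        exact hab
    · obtain ⟨c, h1, h2⟩ := pow_peel_left h
      obtain ⟨p', hp1, hp2, hp3, hp4⟩ := ih (by omega) c b h2
      obtain ⟨e, he1, he2⟩ := B.A_ne_iff.mp h1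
      obtain ⟨n', rfl⟩ : ∃ n', n = n' + 1 := ⟨n - 1, by omega⟩
      refine ⟨fun t => match t with | 0 => e | (t' + 1) => p' t', he1, ?_, ?_, ?_⟩
      · intro t ht
        match t with
        | 0 =>
          show B.rng e = B.src (p' 0)
          rw [he2, hp1]
        | (t' + 1) =>
          exact hp2 t' (by omega)
      · show B.rng (p' n') = b
        exact hp3
      · intro t ht
        match t with
        | 0 =>
          constructor
          · show MAccess B.A a (B.src e)
            rw [he1]
            exact ReflTransGen.refl
          · show MAccess B.A (B.src e) b
            rw [he1]
            exact ReflTransGen.head h1 (access_of_pow h2)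
        | (t' + 1) =>
          have h4 := hp4 t' (by omega)
          exact ⟨ReflTransGen.head h1 h4.1, h4.2⟩

lemma splice_top (y : B.Path) (M : ℕ) (hM : 1 ≤ M) (a : Fin N)
    (h : (B.A ^ M) a (B.vtx y M) ≠ 0) :
    ∃ z : B.Path, (∀ t, M ≤ t → z.1.2 t = y.1.2 t) ∧
      (∀ t, t < M → MAccess B.A a (B.vtx z t) ∧ MAccess B.A (B.vtx z t) (B.vtx y M)) := by
  obtain ⟨p, hp1, hp2, hp3, hp4⟩ := B.path_of_pow M hM a (B.vtx y M) h
  obtain ⟨e0, he0⟩ := B.rng0_surj a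
  set g : ℕ → B.Edge := fun t => if t < M then p t else y.1.2 t with hg
  have hchain : ∀ t, B.rng (g t) = B.src (g (t + 1)) := by
    intro t
    by_cases h1 : t + 1 < M
    · simp only [hg, if_pos (by omega : t < M), if_pos h1]
      exact hp2 t h1
    · by_cases h2 : t + 1 = M
      · simp only [hg, if_pos (by omega : t < M), if_neg h1]
        rw [show t = M - 1 from by omega, hp3]
        rw [show M - 1 + 1 = M from by omega]
        rfl
      · simp only [hg, if_neg (by omega : ¬ t < M), if_neg h1]
        exact y.2.2 t
  have hz0 : B.rng0 e0 = B.src (g 0) := by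
    simp only [hg, if_pos (by omega : 0 < M)]
    rw [he0, hp1]
  refine ⟨⟨(e0, g), hz0, hchain⟩, ?_, ?_⟩
  · intro t ht
    simp only [hg, if_neg (by omega : ¬ t < M)]
  · intro t ht
    have hv : B.vtx ⟨(e0, g), hz0, hchain⟩ t = B.src (p t) := by
      simp only [StationaryBratteli.vtx, hg, if_pos ht]
    rw [hv]
    exact hp4 t ht

lemma splice_mid (w x : B.Path) (m m' : ℕ) (hm : 1 ≤ m) (hmm : m < m')
    (h : (B.A ^ (m' - m)) (B.vtx w m) (B.vtx x m') ≠ 0) :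
    ∃ z : B.Path, z.1.1 = w.1.1 ∧ (∀ t, t < m → z.1.2 t = w.1.2 t) ∧
      ∀ t, m' ≤ t → z.1.2 t = x.1.2 t := by
  obtain ⟨p, hp1, hp2, hp3, _⟩ := B.path_of_pow (m' - m) (by omega) _ _ h
  set g : ℕ → B.Edge :=
    fun t => if t < m then w.1.2 t else if t < m' then p (t - m) else x.1.2 t with hg
  have hchain : ∀ t, B.rng (g t) = B.src (g (t + 1)) := by
    intro t
    by_cases h1 : t + 1 < m
    · simp only [hg, if_pos (by omega : t < m), if_pos h1]
      exact w.2.2 t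
    · by_cases h2 : t + 1 = m
      · simp only [hg, if_pos (by omega : t < m), if_neg h1,
          if_pos (by omega : t + 1 < m')]
        rw [show t + 1 - m = 0 from by omega, hp1, show B.vtx w m = B.src (w.1.2 m) from rfl,
          ← h2]
        exact w.2.2 t
      · by_cases h3 : t + 1 < m'
        · simp only [hg, if_neg (by omega : ¬ t < m), if_pos (by omega : t < m'),
            if_neg h1, if_pos h3]
          rw [show t + 1 - m = (t - m) + 1 from by omega]
          exact hp2 (t - m) (by omega)
        · by_cases h4 : t + 1 = m'
          · simp only [hg, if_neg (by omega : ¬ t < m), if_pos (by omega : t < m'),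
              if_neg h1, if_neg h3]
            rw [show t - m = m' - m - 1 from by omega, hp3, ← h4]
            rfl
          · simp only [hg, if_neg (by omega : ¬ t < m), if_neg (by omega : ¬ t < m'),
              if_neg h1, if_neg h3]
            exact x.2.2 t
  have hz0 : B.rng0 w.1.1 = B.src (g 0) := by
    simp only [hg, if_pos (by omega : 0 < m)]
    exact w.2.1
  refine ⟨⟨(w.1.1, g), hz0, hchain⟩, rfl, ?_, ?_⟩
  · intro t ht
    simp only [hg, if_pos ht]
  · intro t ht
    simp only [hg, if_neg (by omega : ¬ t < m), if_neg (by omega : ¬ t < m')]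

end StationaryBratteli
namespace StationaryBratteli

open Relation

variable {N : ℕ} (B : StationaryBratteli N)

lemma tailEquiv_refl (x : B.Path) : B.TailEquiv x x := ⟨0, fun _ _ => rfl⟩

lemma tailEquiv_symm {x y : B.Path} (h : B.TailEquiv x y) : B.TailEquiv y x := by
  obtain ⟨M, hM⟩ := h
  exact ⟨M, fun n hn => (hM n hn).symm⟩

lemma tailEquiv_trans {x y z : B.Path} (h1 : B.TailEquiv x y) (h2 : B.TailEquiv y z) :
    B.TailEquiv x z := by
  obtain ⟨M1, h1⟩ := h1
  obtain ⟨M2, h2⟩ := h2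
  exact ⟨max M1 M2, fun n hn =>
    (h1 n (le_trans (le_max_left _ _) hn)).trans (h2 n (le_trans (le_max_right _ _) hn))⟩

lemma Xsat_saturated (i : Fin N) : B.Saturated (B.Xsat i) := by
  rintro x ⟨y, hy, hyx⟩ z hxz
  exact ⟨y, hy, B.tailEquiv_trans hyx hxz⟩

lemma vtx_eventual_of_mem_Xsat {i : Fin N} {y : B.Path} (h : y ∈ B.Xsat i) :
    ∃ M, ∀ n, M ≤ n → B.vtx y n ∈ classOf B.A i := by
  obtain ⟨z, hz, ⟨M, hM⟩⟩ := h
  refine ⟨M, fun n hn => ?_⟩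
  have hv : B.vtx y n = B.vtx z n := congrArg B.src (hM n hn).symm
  rw [hv]
  exact hz n

lemma Ysub_nonempty (hI : CondI B.Fmat) {j : Fin N} (hj : BlockNonzero B.A j) :
    ∃ y : B.Path, y ∈ B.Ysub j := by
  obtain ⟨k, hk1, hk⟩ := B.primA hI hj
  have hjj : j ∈ classOf B.A j := ⟨ReflTransGen.refl, ReflTransGen.refl⟩
  have h : ∀ a, a ∈ classOf B.A j → ∃ e : B.Edge, B.src e = a ∧ B.rng e ∈ classOf B.A j := by
    intro a ha
    have haj : (B.A ^ k) a j ≠ 0 := (hk k le_rfl a ha j hjj).ne'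
    obtain ⟨k', rfl⟩ : ∃ k', k = k' + 1 := ⟨k - 1, by omega⟩
    obtain ⟨c, h1, h2⟩ := pow_peel_left haj
    obtain ⟨e, he1, he2⟩ := B.A_ne_iff.mp h1
    refine ⟨e, he1, ?_⟩
    rw [he2]
    exact ⟨ha.1.tail h1, access_of_pow h2⟩
  choose nxt hs hr using h
  let V : ℕ → {a : Fin N // a ∈ classOf B.A j} := fun n =>
    Nat.rec ⟨j, hjj⟩ (fun _ p => ⟨B.rng (nxt p.1 p.2), hr p.1 p.2⟩) n
  let g : ℕ → B.Edge := fun n => nxt (V n).1 (V n).2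
  have hVs : ∀ n, B.src (g n) = (V n).1 := fun n => hs (V n).1 (V n).2
  have hchain : ∀ t, B.rng (g t) = B.src (g (t + 1)) := by
    intro t
    have hv : ((V (t + 1) : {a : Fin N // a ∈ classOf B.A j}) : Fin N) = B.rng (g t) := rfl
    rw [hVs (t + 1), hv]
  obtain ⟨e0, he0⟩ := B.rng0_surj (V 0).1
  have hz0 : B.rng0 e0 = B.src (g 0) := by rw [he0, hVs 0]
  refine ⟨⟨(e0, g), hz0, hchain⟩, ?_⟩
  intro n
  have hv : B.vtx ⟨(e0, g), hz0, hchain⟩ n = (V n).1 := hVs n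
  rw [hv]
  exact (V n).2

lemma mem_Xsat_of_eventual (hI : CondI B.Fmat) {j : Fin N} (hj : BlockNonzero B.A j)
    (y : B.Path) (n₀ : ℕ) (hy : ∀ n, n₀ ≤ n → B.vtx y n ∈ classOf B.A j) :
    y ∈ B.Xsat j := by
  obtain ⟨k, hk1, hk⟩ := B.primA hI hj
  have hM1 : 1 ≤ max n₀ k := le_trans hk1 (le_max_right _ _)
  have hjj : j ∈ classOf B.A j := ⟨ReflTransGen.refl, ReflTransGen.refl⟩
  have hyM : B.vtx y (max n₀ k) ∈ classOf B.A j := hy _ (le_max_left _ _)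
  have hpos : (B.A ^ (max n₀ k)) j (B.vtx y (max n₀ k)) ≠ 0 :=
    (hk _ (le_max_right _ _) j hjj _ hyM).ne'
  obtain ⟨z, hz1, hz2⟩ := B.splice_top y (max n₀ k) hM1 j hpos
  refine ⟨z, ?_, ⟨max n₀ k, fun n hn => hz1 n hn⟩⟩
  intro n
  by_cases hn : n < max n₀ k
  · obtain ⟨h1, h2⟩ := hz2 n hn
    exact ⟨h1, h2.trans hyM.2⟩
  · have hge : max n₀ k ≤ n := not_lt.mp hn
    have hv : B.vtx z n = B.vtx y n := congrArg B.src (hz1 n hge)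
    rw [hv]
    exact hy n (le_trans (le_max_left _ _) hge)

/-- The set of paths all of whose vertices have access to `i`. -/
def AccSet (i : Fin N) : Set B.Path := {y | ∀ n, MAccess B.A (B.vtx y n) i}

lemma accSet_closed (i : Fin N) : IsClosed (B.AccSet i) := by
  have heq : B.AccSet i =
      ⋂ n, (fun y : B.Path => y.1.2 n) ⁻¹' {e | MAccess B.A (B.src e) i} := by
    ext y
    simp only [AccSet, Set.mem_setOf_eq, Set.mem_iInter, Set.mem_preimage]
    rfl
  rw [heq]
  refine isClosed_iInter fun n => ?_
  have hc : Continuous fun y : B.Path => y.1.2 n :=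
    (continuous_apply n).comp (continuous_snd.comp continuous_subtype_val)
  exact (isClosed_discrete _).preimage hc

lemma accSet_eq (hI : CondI B.Fmat) (i : Fin N) :
    B.AccSet i = ⋃ j ∈ {j : Fin N | BlockNonzero B.A j ∧ MAccess B.A j i}, B.Xsat j := by
  ext y
  simp only [Set.mem_iUnion, Set.mem_setOf_eq, exists_prop]
  constructor
  · intro hy
    obtain ⟨n₀, hcl, hnz⟩ := B.eventual_class y
    exact ⟨B.vtx y n₀, ⟨hnz, hy n₀⟩, B.mem_Xsat_of_eventual hI hnz y n₀ hcl⟩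
  · rintro ⟨j, ⟨hjnz, hji⟩, hyX⟩
    obtain ⟨M, hM⟩ := B.vtx_eventual_of_mem_Xsat hyX
    intro n
    have h1 : MAccess B.A (B.vtx y n) (B.vtx y (max n M)) := B.vtx_access y (le_max_left _ _)
    have h2 : B.vtx y (max n M) ∈ classOf B.A j := hM _ (le_max_right _ _)
    exact h1.trans (h2.2.trans hji)

lemma cyl_basis {o : Set B.Path} (ho : IsOpen o) {w : B.Path} (hw : w ∈ o) :
    ∃ n, ∀ z : B.Path, z.1.1 = w.1.1 → (∀ t, t < n → z.1.2 t = w.1.2 t) → z ∈ o := by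
  obtain ⟨V, hV, rfl⟩ := isOpen_induced_iff.mp ho
  obtain ⟨u, v, hu, hv, hwu, hwv, huv⟩ := isOpen_prod_iff.mp hV w.1.1 w.1.2 hw
  obtain ⟨I, u', hI', hIv⟩ := isOpen_pi_iff.mp hv w.1.2 hwv
  refine ⟨I.sup (· + 1), fun z hz1 hz2 => ?_⟩
  have hz : (z.1.1, z.1.2) ∈ u ×ˢ v := by
    refine ⟨by rw [hz1]; exact hwu, hIv fun a ha => ?_⟩
    have h5 : a + 1 ≤ I.sup (· + 1) := Finset.le_sup ha
    have hlt : a < I.sup (· + 1) := Nat.lt_of_lt_of_le (Nat.lt_succ_self a) h5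
    rw [hz2 a hlt]
    exact (hI' a ha).2
  exact huv hz

lemma Xsat_congr {i j : Fin N} (h : MComm B.A i j) : B.Xsat i = B.Xsat j := by
  have hc : classOf B.A i = classOf B.A j := classOf_eq_of_comm h
  unfold StationaryBratteli.Xsat StationaryBratteli.Ysub
  rw [hc]

lemma closure_class_eq (hI : CondI B.Fmat) {i : Fin N} (hi : BlockNonzero B.A i)
    {x : B.Path} (hx : x ∈ B.Xsat i) :
    closure {y | B.TailEquiv x y} = B.AccSet i := by
  apply Set.Subset.antisymm
  · refine closure_minimal ?_ (B.accSet_closed i)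
    intro z hz n
    obtain ⟨M1, hM1⟩ := B.vtx_eventual_of_mem_Xsat hx
    obtain ⟨M2, hM2⟩ := hz
    have h1 : MAccess B.A (B.vtx z n) (B.vtx z (max n (max M1 M2))) :=
      B.vtx_access z (le_max_left _ _)
    have h2 : B.vtx z (max n (max M1 M2)) = B.vtx x (max n (max M1 M2)) :=
      congrArg B.src (hM2 _ ((le_max_right M1 M2).trans (le_max_right _ _))).symm
    have h3 : B.vtx x (max n (max M1 M2)) ∈ classOf B.A i :=
      hM1 _ ((le_max_left M1 M2).trans (le_max_right _ _))
    have h4 : MAccess B.A (B.vtx z (max n (max M1 M2))) i := by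
      rw [h2]
      exact h3.2
    exact h1.trans h4
  · rw [B.accSet_eq hI]
    refine Set.iUnion₂_subset fun j hj => ?_
    obtain ⟨hjnz, hji⟩ := hj
    intro w hw
    rw [mem_closure_iff]
    intro o ho hwo
    obtain ⟨n, hn⟩ := B.cyl_basis ho hwo
    obtain ⟨kj, hkj1, hkj⟩ := B.primA hI hjnz
    obtain ⟨ki, hki1, hki⟩ := B.primA hI hi
    obtain ⟨L, hL⟩ := pow_of_access B.A_nonneg hji
    obtain ⟨Mw, hMw⟩ := B.vtx_eventual_of_mem_Xsat hw
    obtain ⟨Mx, hMx⟩ := B.vtx_eventual_of_mem_Xsat hx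
    set m := max 1 (max n Mw) with hm
    have hm1 : 1 ≤ m := le_max_left _ _
    have hmn : n ≤ m := (le_max_left n Mw).trans (le_max_right _ _)
    have hmw : Mw ≤ m := (le_max_right n Mw).trans (le_max_right _ _)
    set m' := m + kj + L + (ki + Mx) with hm'
    have hwm : B.vtx w m ∈ classOf B.A j := hMw m hmw
    have hxm' : B.vtx x m' ∈ classOf B.A i := hMx m' (by omega)
    have hpow : (B.A ^ (m' - m)) (B.vtx w m) (B.vtx x m') ≠ 0 := by
      have e1 : (B.A ^ kj) (B.vtx w m) j ≠ 0 :=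
        (hkj kj le_rfl _ hwm j ⟨ReflTransGen.refl, ReflTransGen.refl⟩).ne'
      have e3 : (B.A ^ (ki + Mx)) i (B.vtx x m') ≠ 0 :=
        (hki (ki + Mx) (by omega) i ⟨ReflTransGen.refl, ReflTransGen.refl⟩ _ hxm').ne'
      have h12 : (B.A ^ (kj + L)) (B.vtx w m) i ≠ 0 := by
        rw [pow_add]
        exact mul_entry_ne (matpow_nonneg B.A_nonneg _) (matpow_nonneg B.A_nonneg _) e1 hL
      have h123 : (B.A ^ (kj + L + (ki + Mx))) (B.vtx w m) (B.vtx x m') ≠ 0 := by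
        rw [pow_add]
        exact mul_entry_ne (matpow_nonneg B.A_nonneg _) (matpow_nonneg B.A_nonneg _) h12 e3
      rwa [show m' - m = kj + L + (ki + Mx) from by omega]
    obtain ⟨z, hz1, hz2, hz3⟩ := B.splice_mid w x m m' hm1 (by omega) hpow
    refine ⟨z, hn z hz1 (fun t ht => hz2 t (by omega)), ?_⟩
    exact ⟨m', fun t ht => (hz3 t ht).symm⟩

lemma initial_blockNonzero {i : Fin N} (h : InitialClass B.A i) : BlockNonzero B.A i := by
  obtain ⟨e, he⟩ := B.rng_surj i
  have hne : B.A (B.src e) i ≠ 0 := B.A_ne_iff.mpr ⟨e, rfl, he⟩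
  have hcomm := h (B.src e) (ReflTransGen.single hne)
  exact ⟨B.src e, ⟨hcomm.2, hcomm.1⟩, i, ⟨ReflTransGen.refl, ReflTransGen.refl⟩, hne⟩

lemma Xsat_initial_eq (hI : CondI B.Fmat) {i : Fin N} (h : InitialClass B.A i) :
    B.Xsat i = B.AccSet i := by
  rw [B.accSet_eq hI]
  apply Set.Subset.antisymm
  · exact Set.subset_iUnion₂ (s := fun j _ => B.Xsat j) i
      ⟨B.initial_blockNonzero h, ReflTransGen.refl⟩
  · refine Set.iUnion₂_subset fun j hj => ?_
    have hcomm := h j hj.2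
    rw [B.Xsat_congr ⟨hcomm.2, hcomm.1⟩]

end StationaryBratteli

/-- Under condition (I), the closure of the tail equivalence class of
any point of `X_α` is the union of the sets `X_β` over the classes `β ∈ Λ` having access
to `α` in `R(A)`; consequently the minimal components of `X_B` are exactly the sets
`X_α` for `α` an initial class of `R(A)`. -/
theorem orbit_closures_and_minimal_components {N : ℕ} (B : StationaryBratteli N)
    (hap : B.Aperiodic) (hI : CondI B.Fmat) :
    (∀ i : Fin N, BlockNonzero B.A i → ∀ x ∈ B.Xsat i,
      closure { y | B.TailEquiv x y } =
        ⋃ j ∈ { j : Fin N | BlockNonzero B.A j ∧ MAccess B.A j i }, B.Xsat j) ∧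
    (∀ C : Set B.Path,
      (C.Nonempty ∧ IsClosed C ∧ B.Saturated C ∧
        ∀ C' ⊆ C, C'.Nonempty → IsClosed C' → B.Saturated C' → C' = C) ↔
      ∃ i : Fin N, InitialClass B.A i ∧ C = B.Xsat i) := by
  have part1 : ∀ i : Fin N, BlockNonzero B.A i → ∀ x ∈ B.Xsat i,
      closure { y | B.TailEquiv x y } =
        ⋃ j ∈ { j : Fin N | BlockNonzero B.A j ∧ MAccess B.A j i }, B.Xsat j := by
    intro i hi x hx
    rw [B.closure_class_eq hI hi hx, B.accSet_eq hI]
  refine ⟨part1, fun C => ⟨?_, ?_⟩⟩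
  · rintro ⟨⟨x, hxC⟩, hCc, hCs, hCmin⟩
    obtain ⟨n₀, hcl, hnz⟩ := B.eventual_class x
    have hxX : x ∈ B.Xsat (B.vtx x n₀) := B.mem_Xsat_of_eventual hI hnz x n₀ hcl
    obtain ⟨g, hgI, hgacc⟩ := exists_initial_access B.A (B.vtx x n₀)
    have hgnz : BlockNonzero B.A g := B.initial_blockNonzero hgI
    have hXg_sub : B.Xsat g ⊆ C := by
      have hsub : closure {y | B.TailEquiv x y} ⊆ C :=
        closure_minimal (fun z hz => hCs x hxC z hz) hCc
      rw [part1 _ hnz x hxX] at hsub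
      exact subset_trans
        (Set.subset_iUnion₂ (s := fun j _ => B.Xsat j) g ⟨hgnz, hgacc⟩) hsub
    have hXg_closed : IsClosed (B.Xsat g) := by
      rw [B.Xsat_initial_eq hI hgI]
      exact B.accSet_closed g
    obtain ⟨y, hy⟩ := B.Ysub_nonempty hI hgnz
    have hXg_ne : (B.Xsat g).Nonempty := ⟨y, y, hy, B.tailEquiv_refl y⟩
    have := hCmin (B.Xsat g) hXg_sub hXg_ne hXg_closed (B.Xsat_saturated g)
    exact ⟨g, hgI, this.symm⟩
  · rintro ⟨i, hiI, rfl⟩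
    have hinz : BlockNonzero B.A i := B.initial_blockNonzero hiI
    obtain ⟨y, hy⟩ := B.Ysub_nonempty hI hinz
    have hclosed : IsClosed (B.Xsat i) := by
      rw [B.Xsat_initial_eq hI hiI]
      exact B.accSet_closed i
    refine ⟨⟨y, y, hy, B.tailEquiv_refl y⟩, hclosed, B.Xsat_saturated i, ?_⟩
    intro C' hC'sub hC'ne hC'c hC's
    obtain ⟨x, hxC'⟩ := hC'ne
    have hxX : x ∈ B.Xsat i := hC'sub hxC'
    have hsub : closure {y | B.TailEquiv x y} ⊆ C' :=
      closure_minimal (fun z hz => hC's x hxC' z hz) hC'c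
    rw [part1 i hinz x hxX] at hsub
    refine Set.Subset.antisymm hC'sub (subset_trans ?_ hsub)
    exact Set.subset_iUnion₂ (s := fun j _ => B.Xsat j) i
      ⟨hinz, Relation.ReflTransGen.refl⟩
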